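/- arXiv:math/0508159 — 2 statements merged into one kernel-verified Lean document; each statement's English description precedes it below -/
import Mathlib

section
/- Let p be a prime and let Ψ : ℤ_p[[X]] → ℤ_p[[X]] be a function such that for every g ∈ ℤ_p[[X]] there exist x_1, ..., x_{p-1} ∈ ℤ_p[[X]] with g = Ψ(g)((1+X)^p - 1)·1 + Σ_{i=1}^{p-1} (1+X)^i · x_i((1+X)^p - 1) (i.e. Ψ(g) is the 0-th component of g in the basis {(1+X)^i} over the image of substitution by (1+X)^p - 1). Then for every positive integer a, every integer n ≥ 0, and every f ∈ ℤ_p[[X]], the a-fold iterate Ψ^a(X^n · f) belongs to the ideal of ℤ_p[[X]] generated by the elements X^j · p^[(n - p^(a-1) - j·p^a)/(p^(a-1)(p-1))] for 0 ≤ j ≤ [n/p^a]. -/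
open PowerSeries
open Finset

/-- Substitution of a power series `g` with zero constant term into a power series `f`:
the coefficient of `X^d` in `f(g)` is `∑_{n ≤ d} (coeff n f) · (coeff d g^n)`.
(When the constant term of `g` vanishes, `coeff d (g^n) = 0` for `n > d`, so this is
the usual substitution `f ↦ f(g)`.) -/
noncomputable def PowerSeries.subst' {R : Type*} [CommRing R] (g f : R⟦X⟧) : R⟦X⟧ :=
  PowerSeries.mk fun d => ∑ n ∈ Finset.range (d + 1), coeff n f * coeff d (g ^ n)

namespace SE

lemma ub (x d : ℤ) (hd : 0 < d) : x ≤ d * ((x / d).toNat : ℤ) + (d - 1) := by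
  rcases le_or_gt 0 x with hx | hx
  · have h1 : 0 ≤ x / d := Int.ediv_nonneg hx hd.le
    rw [Int.toNat_of_nonneg h1]
    have := Int.emod_lt_of_pos x hd
    have := Int.mul_ediv_add_emod x d
    omega
  · have : 0 ≤ d * ((x / d).toNat : ℤ) := by positivity
    omega

lemma div_le_of (x d : ℤ) (m : ℕ) (hd : 0 < d) (h : x < d * (m+1)) : (x/d).toNat ≤ m := by
  rw [Int.toNat_le, ← Int.lt_add_one_iff, Int.ediv_lt_iff_lt_mul hd]
  linarith

lemma N1 (A d : ℤ) (hd : 0 < d) (m : ℕ) :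
    (((A + m * d) / d).toNat) ≤ m + (A / d).toNat := by
  apply div_le_of _ _ _ hd
  have := ub A d hd
  push_cast
  linarith

lemma N2 (P Q N J J' : ℤ) (hP : 2 ≤ P) (hQ : 1 ≤ Q) (h1 : J * P ≤ N) (h2 : J' * (Q * P) ≤ J) :
    ((N - Q*P - J'*(Q*P*P)) / (Q*P*(P-1))).toNat
      ≤ ((N - 1 - J*P) / (P-1)).toNat + ((J - Q - J'*(Q*P)) / (Q*(P-1))).toNat := by
  have hP0 : (0:ℤ) < P := by linarith
  have hQ0 : (0:ℤ) < Q := by linarith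
  have hP1 : (0:ℤ) < P - 1 := by linarith
  have e1n : (0:ℤ) ≤ (((N - 1 - J*P) / (P-1)).toNat : ℤ) := by positivity
  have e2n : (0:ℤ) ≤ (((J - Q - J'*(Q*P)) / (Q*(P-1))).toNat : ℤ) := by positivity
  have hu1 := ub (N - 1 - J*P) (P-1) hP1
  have hu2 := ub (J - Q - J'*(Q*P)) (Q*(P-1)) (mul_pos hQ0 hP1)
  apply div_le_of _ _ _ (mul_pos (mul_pos hQ0 hP0) hP1)
  push_cast
  nlinarith [mul_le_mul_of_nonneg_left hu2 hP0.le,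
    mul_nonneg (mul_nonneg (by nlinarith : (0:ℤ) ≤ Q*P - 1) hP1.le) e1n]


variable {R : Type*} [CommRing R] {g : R⟦X⟧}

lemma coeff_subst' (g f : R⟦X⟧) (d : ℕ) :
    coeff d (subst' g f) = ∑ n ∈ Finset.range (d + 1), coeff n f * coeff d (g ^ n) := by
  simp [subst', coeff_mk]

lemma coeff_pow_eq_zero (hg : constantCoeff g = 0) {d n : ℕ} (h : d < n) :
    coeff d (g ^ n) = 0 := by
  have hX : (X : R⟦X⟧) ∣ g := X_dvd_iff.mpr hg
  have : (X : R⟦X⟧) ^ n ∣ g ^ n := pow_dvd_pow_of_dvd hX n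
  exact X_pow_dvd_iff.mp this d h

lemma coeff_eq_of_sub_dvd {a b : R⟦X⟧} {m d : ℕ} (h : (X : R⟦X⟧) ^ m ∣ a - b) (hd : d < m) :
    coeff d a = coeff d b := by
  have := X_pow_dvd_iff.mp h d hd
  rw [map_sub, sub_eq_zero] at this
  exact this

lemma eval₂_low_coeff_zero {Q : Polynomial R} {m : ℕ} (hg : constantCoeff g = 0)
    (hQ : ∀ d < m, Q.coeff d = 0) : (X : R⟦X⟧) ^ m ∣ Polynomial.eval₂ (C (R := R)) g Q := by
  obtain ⟨Q', rfl⟩ := (Polynomial.X_pow_dvd_iff).mpr hQ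
  rw [Polynomial.eval₂_mul, Polynomial.eval₂_X_pow]
  exact Dvd.dvd.mul_right (pow_dvd_pow_of_dvd (X_dvd_iff.mpr hg) m) _

lemma subst'_eval₂ (hg : constantCoeff g = 0) (f : R⟦X⟧) (m : ℕ) :
    (X : R⟦X⟧) ^ m ∣ subst' g f - Polynomial.eval₂ (C (R := R)) g (trunc m f) := by
  rw [X_pow_dvd_iff]
  intro d hd
  rw [map_sub, sub_eq_zero, coeff_subst']
  rw [Polynomial.eval₂_eq_sum, Polynomial.sum_def, map_sum]
  have h1 : ∑ n ∈ Finset.range (d + 1), coeff n f * coeff d (g ^ n)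
      = ∑ n ∈ Finset.range m, coeff n f * coeff d (g ^ n) := by
    apply Finset.sum_subset
    · exact Finset.range_subset_range.mpr hd
    · intro n _ hn
      rw [coeff_pow_eq_zero hg (by simpa using hn), mul_zero]
  rw [h1]
  have h2 : ∑ n ∈ (trunc m f).support, coeff d (C ((trunc m f).coeff n) * g ^ n)
      = ∑ n ∈ Finset.range m, coeff d (C ((trunc m f).coeff n) * g ^ n) := by
    apply Finset.sum_subset
    · intro n hn
      have := Polynomial.le_degree_of_ne_zero (Polynomial.mem_support_iff.mp hn)
      have hdeg := degree_trunc_lt f m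
      rw [Finset.mem_range]
      exact_mod_cast lt_of_le_of_lt this hdeg
    · intro n _ hn
      rw [Polynomial.notMem_support_iff.mp hn, map_zero, zero_mul, map_zero]
  rw [h2]
  apply Finset.sum_congr rfl
  intro n hn
  rw [coeff_C_mul, coeff_trunc]
  simp [Finset.mem_range.mp hn]

lemma subst'_mul (hg : constantCoeff g = 0) (f₁ f₂ : R⟦X⟧) :
    subst' g (f₁ * f₂) = subst' g f₁ * subst' g f₂ := by
  ext d
  set m := d + 1 with hm
  have h1 := subst'_eval₂ hg (f₁ * f₂) m
  have h2 := subst'_eval₂ hg f₁ m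
  have h3 := subst'_eval₂ hg f₂ m
  have key : (X : R⟦X⟧) ^ m ∣ subst' g f₁ * subst' g f₂ -
      Polynomial.eval₂ (C (R := R)) g (trunc m f₁ * trunc m f₂) := by
    rw [Polynomial.eval₂_mul]
    have : subst' g f₁ * subst' g f₂ -
        Polynomial.eval₂ (C (R := R)) g (trunc m f₁) * Polynomial.eval₂ (C (R := R)) g (trunc m f₂)
        = (subst' g f₁ - Polynomial.eval₂ (C (R := R)) g (trunc m f₁)) * subst' g f₂ +
          Polynomial.eval₂ (C (R := R)) g (trunc m f₁) *
            (subst' g f₂ - Polynomial.eval₂ (C (R := R)) g (trunc m f₂)) := by ring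
    rw [this]
    exact dvd_add (h2.mul_right _) (h3.mul_left _)
  have hpoly : (X : R⟦X⟧) ^ m ∣ Polynomial.eval₂ (C (R := R)) g (trunc m f₁ * trunc m f₂)
      - Polynomial.eval₂ (C (R := R)) g (trunc m (f₁ * f₂)) := by
    rw [← Polynomial.eval₂_sub]
    apply eval₂_low_coeff_zero hg
    intro e he
    rw [Polynomial.coeff_sub, Polynomial.coeff_mul, coeff_trunc, if_pos he, coeff_mul,
      sub_eq_zero]
    apply Finset.sum_congr rfl
    intro x hx
    have hx1 : x.1 < m := lt_of_le_of_lt (Finset.HasAntidiagonal.antidiagonal.fst_le hx) he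
    have hx2 : x.2 < m := lt_of_le_of_lt (Finset.HasAntidiagonal.antidiagonal.snd_le hx) he
    rw [coeff_trunc, coeff_trunc, if_pos hx1, if_pos hx2]
  have : coeff d (subst' g (f₁ * f₂)) = coeff d (subst' g f₁ * subst' g f₂) := by
    have e1 := coeff_eq_of_sub_dvd h1 (by omega : d < m)
    have e2 := coeff_eq_of_sub_dvd key (by omega : d < m)
    have e3 := coeff_eq_of_sub_dvd hpoly (by omega : d < m)
    rw [e1, e2, ← e3]
  exact this

lemma subst'_add (g f₁ f₂ : R⟦X⟧) : subst' g (f₁ + f₂) = subst' g f₁ + subst' g f₂ := by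
  ext d
  simp [coeff_subst', add_mul, Finset.sum_add_distrib]

lemma subst'_sub (g f₁ f₂ : R⟦X⟧) : subst' g (f₁ - f₂) = subst' g f₁ - subst' g f₂ := by
  ext d
  simp [coeff_subst', sub_mul, Finset.sum_sub_distrib]

lemma subst'_C (g : R⟦X⟧) (c : R) : subst' g (C c) = C c := by
  ext d
  rw [coeff_subst', Finset.sum_eq_single 0]
  · simp [coeff_C]
  · intro n _ hn
    simp [coeff_C, hn]
  · simp

lemma subst'_C_mul (g : R⟦X⟧) (c : R) (f : R⟦X⟧) :
    subst' g (C c * f) = C c * subst' g f := by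
  ext d
  simp [coeff_subst', coeff_C_mul, Finset.mul_sum, mul_assoc]

lemma subst'_one (g : R⟦X⟧) : subst' g 1 = 1 := by
  have := subst'_C g 1
  simpa using this

lemma subst'_X (hg : constantCoeff g = 0) : subst' g X = g := by
  ext d
  rw [coeff_subst', Finset.sum_eq_single 1]
  · simp
  · intro n _ hn
    simp [coeff_X, hn]
  · intro h
    have hd : d = 0 := by simpa using h
    subst hd
    simp [coeff_zero_eq_constantCoeff, hg]

lemma subst'_pow (hg : constantCoeff g = 0) (k : ℕ) : subst' g (X ^ k) = g ^ k := by
  induction k with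
  | zero => simpa using subst'_one g
  | succ k ih => rw [pow_succ, subst'_mul hg, ih, subst'_X hg, pow_succ]

lemma map_subst' {S : Type*} [CommRing S] (π : R →+* S) (g f : R⟦X⟧) :
    map π (subst' g f) = subst' (map π g) (map π f) := by
  ext d
  simp only [coeff_map, coeff_subst']
  rw [map_sum]
  apply Finset.sum_congr rfl
  intro n _
  rw [map_mul, ← map_pow, coeff_map]

open Finset in
lemma coeff_one_add_pow (m d : ℕ) :
    coeff d ((1 + X) ^ m) = (m.choose d : R) := by
  rw [add_comm (1 : R⟦X⟧) X, add_pow]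
  rw [map_sum]
  have : ∀ k ∈ range (m + 1),
      coeff d (X ^ k * 1 ^ (m - k) * (m.choose k : R⟦X⟧)) =
      if d = k then (m.choose k : R) else 0 := by
    intro k _
    rw [one_pow, mul_one, ← map_natCast (C (R := R)) (m.choose k), mul_comm, coeff_C_mul, coeff_X_pow]
    split <;> simp
  rw [Finset.sum_congr rfl this, Finset.sum_ite_eq (range (m + 1)) d]
  split
  · rfl
  · rename_i h
    rw [Nat.choose_eq_zero_of_lt (by simpa using h)]
    simp

lemma coeff_subst'_X_pow (p : ℕ) (hp : 0 < p) (y : R⟦X⟧) (d : ℕ) :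
    coeff d (subst' ((X : R⟦X⟧) ^ p) y) =
      if p ∣ d then coeff (d / p) y else 0 := by
  rw [coeff_subst']
  have hterm : ∀ n ∈ Finset.range (d+1),
      coeff n y * coeff d (((X : R⟦X⟧) ^ p) ^ n) =
      if d = p * n then coeff n y else 0 := by
    intro n _
    rw [← pow_mul, coeff_X_pow]
    split <;> simp
  rw [Finset.sum_congr rfl hterm]
  by_cases hdvd : p ∣ d
  · obtain ⟨c, rfl⟩ := hdvd
    rw [Finset.sum_eq_single c]
    · rw [if_pos rfl, if_pos ⟨c, rfl⟩, Nat.mul_div_cancel_left c hp]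
    · intro n _ hn
      rw [if_neg (by intro h; exact hn (Nat.eq_of_mul_eq_mul_left hp h.symm))]
    · intro h
      exfalso
      apply h
      rw [Finset.mem_range]
      calc c ≤ p * c := Nat.le_mul_of_pos_left c hp
      _ < p * c + 1 := by omega
  · rw [if_neg hdvd, Finset.sum_eq_zero]
    intro n _
    rw [if_neg (by intro h; exact hdvd ⟨n, h⟩)]

lemma indep_aux (p : ℕ) (hp : 0 < p) (y : ℕ → R⟦X⟧)
    (h : ∑ i ∈ range p, (1 + X) ^ i * subst' ((X : R⟦X⟧) ^ p) (y i) = 0) :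
    ∀ i < p, y i = 0 := by
  have scalar : ∀ i < p, ∀ k, ∑ i' ∈ range p, (i'.choose i : R) * coeff k (y i') = 0 := by
    intro i hi k
    have h0 := congrArg (coeff (p * k + i)) h
    rw [map_zero, map_sum] at h0
    rw [← h0]
    apply Finset.sum_congr rfl
    intro i' hi'
    have hi'p : i' < p := mem_range.mp hi'
    rw [coeff_mul, Finset.sum_eq_single (i, p * k)]
    · rw [coeff_one_add_pow, coeff_subst'_X_pow p hp, if_pos ⟨k, rfl⟩,
        Nat.mul_div_cancel_left k hp]
    · rintro ⟨a, b⟩ hab hne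
      have habs : a + b = p * k + i := Finset.HasAntidiagonal.mem_antidiagonal.mp hab
      rw [coeff_one_add_pow, coeff_subst'_X_pow p hp]
      rcases le_or_gt a i' with ha | ha
      · split
        · rename_i hdvd
          obtain ⟨c, rfl⟩ := hdvd
          exfalso
          have hap : a < p := lt_of_le_of_lt ha hi'p
          have : a % p = (p * k + i) % p := by
            rw [← habs, Nat.add_mul_mod_self_left]
          rw [Nat.mul_add_mod, Nat.mod_eq_of_lt hap, Nat.mod_eq_of_lt hi] at this
          subst this
          have : c = k := Nat.eq_of_mul_eq_mul_left hp (by omega)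
          subst this
          exact hne rfl
        · rw [mul_zero]
      · rw [Nat.choose_eq_zero_of_lt ha]
        simp
    · intro hnot
      exfalso
      exact hnot (Finset.HasAntidiagonal.mem_antidiagonal.mpr (by omega))
  have main : ∀ m i, i < p → p - i = m → y i = 0 := by
    intro m
    induction m using Nat.strong_induction_on with
    | _ m IH =>
      intro i hi hm
      ext k
      rw [map_zero]
      have rel := scalar i hi k
      rw [Finset.sum_eq_single i] at rel
      · simpa using rel
      · intro i' hi'mem hne
        rcases lt_or_gt_of_ne hne with hlt | hgt
        · rw [Nat.choose_eq_zero_of_lt hlt]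
          simp
        · have : y i' = 0 := IH (p - i') (by omega) i' (mem_range.mp hi'mem) rfl
          rw [this, map_zero, mul_zero]
      · intro habs
        exact absurd (mem_range.mpr hi) habs
  exact fun i hi => main (p - i) i hi rfl

variable (p : ℕ) [hp : Fact p.Prime]

lemma pd_eq_zero_of_all_pow_dvd (x : ℤ_[p]) (h : ∀ m : ℕ, (p : ℤ_[p]) ^ m ∣ x) : x = 0 := by
  by_contra hx
  have hn : 0 < ‖x‖ := by simpa [norm_pos_iff] using hx
  obtain ⟨k, hk⟩ := PadicInt.exists_pow_neg_lt p hn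
  have : ‖x‖ ≤ (p : ℝ) ^ (-(k : ℤ)) := by
    rw [PadicInt.norm_le_pow_iff_mem_span_pow, Ideal.mem_span_singleton]
    exact h k
  linarith

lemma one_add_X_pow_p_modp : ((1 : (ZMod p)⟦X⟧) + X) ^ p = 1 + X ^ p := by
  have hp2 := hp.out.two_le
  ext d
  rw [coeff_one_add_pow, map_add, coeff_X_pow, coeff_one]
  rcases Nat.eq_zero_or_pos d with rfl | hd
  · rw [if_pos rfl, if_neg (by omega), Nat.choose_zero_right, add_zero, Nat.cast_one]
  rcases lt_trichotomy d p with hlt | rfl | hgt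
  · rw [if_neg (by omega), if_neg (by omega), add_zero,
      ZMod.natCast_eq_zero_iff]
    exact hp.out.dvd_choose_self (by omega) hlt
  · rw [Nat.choose_self, if_neg (by omega), if_pos rfl, zero_add, Nat.cast_one]
  · rw [Nat.choose_eq_zero_of_lt hgt, if_neg (by omega), if_neg (by omega)]
    simp

lemma map_Y_modp :
    map (PadicInt.toZMod (p := p)) (((1 + X) ^ p - 1) : ℤ_[p]⟦X⟧) = (X : (ZMod p)⟦X⟧) ^ p := by
  have : map (PadicInt.toZMod (p := p)) (((1 + X) ^ p - 1) : ℤ_[p]⟦X⟧)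
      = ((1 : (ZMod p)⟦X⟧) + X) ^ p - 1 := by
    simp [map_sub, map_pow, map_add, PowerSeries.map_X]
  rw [this, one_add_X_pow_p_modp]
  ring

lemma dvd_coeff_of_rel (w : ℕ → ℤ_[p]⟦X⟧)
    (h : ∑ i ∈ range p, (1 + X) ^ i * subst' (((1 + X) ^ p - 1) : ℤ_[p]⟦X⟧) (w i) = 0) :
    ∀ i < p, ∀ k, (p : ℤ_[p]) ∣ coeff k (w i) := by
  set π := PadicInt.toZMod (p := p)
  have h0 := congrArg (map π) h
  rw [map_zero, map_sum] at h0
  have h1 : ∑ i ∈ range p, (1 + X) ^ i *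
      subst' ((X : (ZMod p)⟦X⟧) ^ p) (map π (w i)) = 0 := by
    rw [← h0]
    apply Finset.sum_congr rfl
    intro i _
    rw [map_mul, map_pow, map_add, map_one, PowerSeries.map_X, map_subst', map_Y_modp]
  have h2 := indep_aux p hp.out.pos _ h1
  intro i hi k
  have h3 : π (coeff k (w i)) = 0 := by
    have := congrArg (coeff k) (h2 i hi)
    rwa [coeff_map, map_zero] at this
  have h4 : coeff k (w i) ∈ RingHom.ker π := h3
  rw [PadicInt.ker_toZMod, PadicInt.maximalIdeal_eq_span_p, Ideal.mem_span_singleton] at h4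
  exact h4

lemma C_p_ne_zero : (C (p : ℤ_[p])) ≠ 0 := by
  intro hC
  have := congrArg constantCoeff hC
  rw [constantCoeff_C, map_zero] at this
  exact_mod_cast hp.out.ne_zero (by exact_mod_cast this)

lemma indep (w : ℕ → ℤ_[p]⟦X⟧)
    (h : ∑ i ∈ range p, (1 + X) ^ i * subst' (((1 + X) ^ p - 1) : ℤ_[p]⟦X⟧) (w i) = 0) :
    ∀ i < p, w i = 0 := by
  have key : ∀ m : ℕ, ∃ v : ℕ → ℤ_[p]⟦X⟧,
      (∀ i < p, w i = C ((p : ℤ_[p]) ^ m) * v i) ∧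
      ∑ i ∈ range p, (1 + X) ^ i * subst' (((1 + X) ^ p - 1) : ℤ_[p]⟦X⟧) (v i) = 0 := by
    intro m
    induction m with
    | zero => exact ⟨w, fun i _ => by simp, h⟩
    | succ m ih =>
      obtain ⟨v, hv, hrel⟩ := ih
      have hd := dvd_coeff_of_rel p v hrel
      set u : ℕ → ℤ_[p]⟦X⟧ := fun i =>
        if hi : i < p then PowerSeries.mk (fun k => Classical.choose (hd i hi k)) else 0 with hu_def
      have hu : ∀ i < p, v i = C (p : ℤ_[p]) * u i := by
        intro i hi
        ext k
        rw [coeff_C_mul, hu_def]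
        simp only [dif_pos hi, coeff_mk]
        exact Classical.choose_spec (hd i hi k)
      refine ⟨u, ?_, ?_⟩
      · intro i hi
        rw [hv i hi, hu i hi, ← mul_assoc, ← map_mul, ← pow_succ]
      · have hrel2 : C (p : ℤ_[p]) *
            (∑ i ∈ range p, (1 + X) ^ i * subst' (((1 + X) ^ p - 1) : ℤ_[p]⟦X⟧) (u i)) = 0 := by
          rw [Finset.mul_sum, ← hrel]
          apply Finset.sum_congr rfl
          intro i hi
          rw [hu i (mem_range.mp hi), subst'_C_mul]
          ring
        rcases mul_eq_zero.mp hrel2 with hC | hS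
        · exact absurd hC (C_p_ne_zero p)
        · exact hS
  intro i hi
  ext k
  rw [map_zero]
  apply pd_eq_zero_of_all_pow_dvd p
  intro m
  obtain ⟨v, hv, _⟩ := key m
  rw [hv i hi, coeff_C_mul]
  exact Dvd.intro _ rfl

lemma hYc : constantCoeff (((1 + X) ^ p - 1) : ℤ_[p]⟦X⟧) = 0 := by
  simp

lemma range_split {A : Type*} [AddCommMonoid A] (F : ℕ → A) :
    ∑ i ∈ range p, F i = F 0 + ∑ i ∈ Icc 1 (p - 1), F i := by
  have h2 := hp.out.two_le
  have : range p = insert 0 (Icc 1 (p - 1)) := by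
    ext a
    simp only [mem_range, mem_insert, mem_Icc]
    omega
  rw [this, Finset.sum_insert (by simp)]

/-- The error series: `(1+X)^p - 1 = X^p + p * Ep`. -/
noncomputable def Ep : ℤ_[p]⟦X⟧ :=
  ∑ i ∈ Icc 1 (p - 1), C ((p.choose i / p : ℕ) : ℤ_[p]) * X ^ i

lemma hY : ((1 + X) ^ p - 1 : ℤ_[p]⟦X⟧) = X ^ p + C (p : ℤ_[p]) * Ep p := by
  have h2 := hp.out.two_le
  ext d
  rw [map_sub, coeff_one_add_pow, map_add, coeff_X_pow, coeff_C_mul, coeff_one]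
  have hEp : coeff d (Ep p) =
      if d ∈ Icc 1 (p - 1) then ((p.choose d / p : ℕ) : ℤ_[p]) else 0 := by
    rw [Ep, map_sum]
    have : ∀ i ∈ Icc 1 (p-1), coeff d (C ((p.choose i / p : ℕ) : ℤ_[p]) * X ^ i)
        = if i = d then ((p.choose i / p : ℕ) : ℤ_[p]) else 0 := by
      intro i _
      rw [coeff_C_mul, coeff_X_pow]
      by_cases h : d = i
      · subst h; simp
      · rw [if_neg h, if_neg (fun hh => h hh.symm), mul_zero]
    rw [Finset.sum_congr rfl this, Finset.sum_ite_eq' (Icc 1 (p-1)) d]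
  rw [hEp]
  by_cases hd0 : d = 0
  · subst hd0
    rw [if_pos rfl, if_neg (by omega), if_neg (by simp), Nat.choose_zero_right]
    simp
  rcases lt_trichotomy d p with hlt | rfl | hgt
  · rw [if_neg hd0, if_neg (by omega), if_pos (by simp [mem_Icc]; omega), sub_zero, zero_add]
    have hdvd : p ∣ p.choose d := hp.out.dvd_choose_self hd0 hlt
    exact_mod_cast (Nat.mul_div_cancel' hdvd).symm
  · rw [if_neg hd0, if_pos rfl, if_neg (by simp [mem_Icc]; omega), Nat.choose_self]
    simp
  · rw [if_neg hd0, if_neg (by omega), if_neg (by simp [mem_Icc]; omega),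
      Nat.choose_eq_zero_of_lt hgt]
    simp

lemma Ep_dvd : (X : ℤ_[p]⟦X⟧) ∣ Ep p := by
  apply Finset.dvd_sum
  intro i hi
  have : i ≠ 0 := by have := (mem_Icc.mp hi).1; omega
  exact Dvd.dvd.mul_left (dvd_pow_self X this) _

/-- The exponent in the sharp estimate. -/
def eI (a n j : ℕ) : ℕ :=
  ((((n : ℤ) - (p : ℤ) ^ (a - 1) - j * (p : ℤ) ^ a) /
          ((p : ℤ) ^ (a - 1) * ((p : ℤ) - 1))).toNat)

/-- The target ideal. -/
noncomputable def Idl (a n : ℕ) : Ideal ℤ_[p]⟦X⟧ :=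
  Ideal.span ((fun j : ℕ => X ^ j * (p : ℤ_[p]⟦X⟧) ^ (eI p a n j)) '' (Set.Iic (n / p ^ a)))

lemma mem_Idl_of (a n j e : ℕ) (hj : j ≤ n / p ^ a) (he : eI p a n j ≤ e) (h : ℤ_[p]⟦X⟧) :
    X ^ j * (p : ℤ_[p]⟦X⟧) ^ e * h ∈ Idl p a n := by
  have hg : (X ^ j * (p : ℤ_[p]⟦X⟧) ^ (eI p a n j)) ∈ Idl p a n :=
    Ideal.subset_span ⟨j, hj, rfl⟩
  obtain ⟨k, rfl⟩ : ∃ k, e = eI p a n j + k := ⟨e - eI p a n j, (Nat.add_sub_cancel' he).symm⟩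
  have hsplit : X ^ j * (p : ℤ_[p]⟦X⟧) ^ (eI p a n j + k) * h
      = (X ^ j * (p : ℤ_[p]⟦X⟧) ^ (eI p a n j)) * ((p : ℤ_[p]⟦X⟧) ^ k * h) := by
    rw [pow_add]
    ring
  rw [hsplit]
  exact Ideal.mul_mem_right _ _ hg

lemma span_mul_mem {A : Type*} [CommRing A] (I : Ideal A) (S : Set A) (u : A)
    (hu : ∀ t ∈ S, u * t ∈ I) : ∀ w ∈ Ideal.span S, u * w ∈ I := by
  intro w hw
  induction hw using Submodule.span_induction with
  | mem t ht => exact hu t ht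
  | zero => rw [mul_zero]; exact I.zero_mem
  | add x y _ _ ihx ihy => rw [mul_add]; exact I.add_mem ihx ihy
  | smul a x _ ih =>
    rw [smul_eq_mul, mul_comm a x, ← mul_assoc]
    exact I.mul_mem_right a ih

lemma trivial_mem (a n : ℕ) (ha : 1 ≤ a) (hn : n < p ^ a) (g : ℤ_[p]⟦X⟧) :
    g ∈ Idl p a n := by
  have h2 := hp.out.two_le
  have hpa : ((p : ℤ) ^ (a-1)) * p = (p : ℤ) ^ a := by
    rw [← pow_succ]
    congr 1
    omega
  have hQ1 : (1:ℤ) ≤ (p:ℤ)^(a-1) := one_le_pow₀ (by exact_mod_cast Nat.one_le_of_lt h2)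
  have he : eI p a n 0 = 0 := by
    rw [eI]
    apply Nat.le_zero.mp
    apply div_le_of _ _ _ (by nlinarith [hQ1] : (0:ℤ) < (p:ℤ)^(a-1) * ((p:ℤ)-1))
    have hnZ : (n:ℤ) < (p:ℤ)^a := by exact_mod_cast hn
    push_cast
    nlinarith [hQ1]
  have := mem_Idl_of p a n 0 0 (Nat.zero_le _) (le_of_eq he) g
  simpa using this

section PsiRules
variable (Ψ : ℤ_[p]⟦X⟧ → ℤ_[p]⟦X⟧)
variable (hΨ : ∀ g : ℤ_[p]⟦X⟧, ∃ x : ℕ → ℤ_[p]⟦X⟧,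
      g = subst' ((1 + X) ^ p - 1) (Ψ g) * 1 +
        ∑ i ∈ Finset.Icc 1 (p - 1), (1 + X) ^ i * subst' ((1 + X) ^ p - 1) (x i))
include hΨ

lemma uniq (g : ℤ_[p]⟦X⟧) (z : ℕ → ℤ_[p]⟦X⟧)
    (hz : g = subst' ((1 + X) ^ p - 1) (z 0) +
      ∑ i ∈ Finset.Icc 1 (p - 1), (1 + X) ^ i * subst' ((1 + X) ^ p - 1) (z i)) :
    Ψ g = z 0 := by
  obtain ⟨x, hx⟩ := hΨ g
  set w : ℕ → ℤ_[p]⟦X⟧ := fun i => if i = 0 then Ψ g - z 0 else x i - z i with hw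
  have hrel : ∑ i ∈ range p, (1 + X) ^ i *
      subst' (((1 + X) ^ p - 1) : ℤ_[p]⟦X⟧) (w i) = 0 := by
    rw [range_split p]
    have h0 : (1 + X : ℤ_[p]⟦X⟧) ^ 0 * subst' ((1 + X) ^ p - 1) (w 0)
        = subst' ((1 + X) ^ p - 1) (Ψ g) * 1 - subst' ((1 + X) ^ p - 1) (z 0) := by
      rw [hw]
      simp only [eq_self_iff_true, if_true, pow_zero, one_mul, mul_one, subst'_sub]
    have h1 : ∑ i ∈ Icc 1 (p - 1), (1 + X : ℤ_[p]⟦X⟧) ^ i * subst' ((1 + X) ^ p - 1) (w i)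
        = ∑ i ∈ Icc 1 (p - 1), (1 + X : ℤ_[p]⟦X⟧) ^ i * subst' ((1 + X) ^ p - 1) (x i)
          - ∑ i ∈ Icc 1 (p - 1), (1 + X : ℤ_[p]⟦X⟧) ^ i * subst' ((1 + X) ^ p - 1) (z i) := by
      rw [← Finset.sum_sub_distrib]
      apply Finset.sum_congr rfl
      intro i hi
      have : i ≠ 0 := by have := (mem_Icc.mp hi).1; omega
      rw [hw]
      simp only [if_neg this, subst'_sub, mul_sub]
    rw [h0, h1]
    linear_combination hz - hx
  have := indep p w hrel 0 hp.out.pos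
  rw [hw] at this
  simp only [eq_self_iff_true, if_true, sub_eq_zero] at this
  exact this

lemma rule_mul (h g : ℤ_[p]⟦X⟧) :
    Ψ (subst' ((1 + X) ^ p - 1) h * g) = h * Ψ g := by
  obtain ⟨x, hx⟩ := hΨ g
  have := uniq p Ψ hΨ (subst' ((1 + X) ^ p - 1) h * g)
    (fun i => if i = 0 then h * Ψ g else h * x i) ?_
  · simpa using this
  · simp only [eq_self_iff_true, if_true]
    conv_lhs => rw [hx]
    rw [mul_add, mul_one, subst'_mul (hYc p), Finset.mul_sum]
    congr 1
    apply Finset.sum_congr rfl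
    intro i hi
    have hne : i ≠ 0 := by have := (mem_Icc.mp hi).1; omega
    rw [if_neg hne, subst'_mul (hYc p)]
    ring

lemma rule_add (g₁ g₂ : ℤ_[p]⟦X⟧) : Ψ (g₁ + g₂) = Ψ g₁ + Ψ g₂ := by
  obtain ⟨x₁, hx₁⟩ := hΨ g₁
  obtain ⟨x₂, hx₂⟩ := hΨ g₂
  have := uniq p Ψ hΨ (g₁ + g₂) (fun i => if i = 0 then Ψ g₁ + Ψ g₂ else x₁ i + x₂ i) ?_
  · simpa using this
  · simp only [eq_self_iff_true, if_true]
    have hsum : ∑ i ∈ Icc 1 (p-1), (1 + X : ℤ_[p]⟦X⟧) ^ i * subst' ((1 + X) ^ p - 1)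
          (if i = 0 then Ψ g₁ + Ψ g₂ else x₁ i + x₂ i)
        = ∑ i ∈ Icc 1 (p-1), (1 + X : ℤ_[p]⟦X⟧) ^ i * subst' ((1 + X) ^ p - 1) (x₁ i)
          + ∑ i ∈ Icc 1 (p-1), (1 + X : ℤ_[p]⟦X⟧) ^ i * subst' ((1 + X) ^ p - 1) (x₂ i) := by
      rw [← Finset.sum_add_distrib]
      apply Finset.sum_congr rfl
      intro i hi
      have hne : i ≠ 0 := by have := (mem_Icc.mp hi).1; omega
      rw [if_neg hne, subst'_add]
      ring
    conv_lhs => rw [hx₁, hx₂]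
    rw [subst'_add, hsum]
    ring

lemma psi_zero : Ψ 0 = 0 := by
  have h := rule_add p Ψ hΨ 0 0
  rw [add_zero] at h
  exact (add_eq_left.mp h.symm)

lemma rule_sum {ι : Type*} (s : Finset ι) (F : ι → ℤ_[p]⟦X⟧) :
    Ψ (∑ k ∈ s, F k) = ∑ k ∈ s, Ψ (F k) := by
  classical
  induction s using Finset.cons_induction with
  | empty => simpa using psi_zero p Ψ hΨ
  | cons k s hk ih =>
    rw [Finset.sum_cons, rule_add p Ψ hΨ, ih, Finset.sum_cons]

lemma rule_C_mul (c : ℤ_[p]) (g : ℤ_[p]⟦X⟧) : Ψ (C c * g) = C c * Ψ g := by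
  have := rule_mul p Ψ hΨ (C c) g
  rwa [subst'_C] at this

lemma iter_zero : ∀ a : ℕ, Ψ^[a] 0 = 0 := by
  intro a
  induction a with
  | zero => rfl
  | succ a ih => rw [Function.iterate_succ_apply, psi_zero p Ψ hΨ, ih]

lemma iter_add (a : ℕ) (g₁ g₂ : ℤ_[p]⟦X⟧) : Ψ^[a] (g₁ + g₂) = Ψ^[a] g₁ + Ψ^[a] g₂ := by
  induction a generalizing g₁ g₂ with
  | zero => rfl
  | succ a ih =>
    rw [Function.iterate_succ_apply, Function.iterate_succ_apply,
      Function.iterate_succ_apply, rule_add p Ψ hΨ, ih]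

lemma iter_C_mul (a : ℕ) (c : ℤ_[p]) (g : ℤ_[p]⟦X⟧) :
    Ψ^[a] (C c * g) = C c * Ψ^[a] g := by
  induction a generalizing g with
  | zero => rfl
  | succ a ih =>
    rw [Function.iterate_succ_apply, Function.iterate_succ_apply, rule_C_mul p Ψ hΨ, ih]

theorem thmA (n : ℕ) (f : ℤ_[p]⟦X⟧) : Ψ (X ^ n * f) ∈ Idl p 1 n := by
  have h2 := hp.out.two_le
  induction n using Nat.strong_induction_on generalizing f with
  | _ n IH =>
  by_cases hn : n < p
  · exact trivial_mem p 1 n le_rfl (by simpa using hn) _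
  push_neg at hn
  set q := n / p with hq
  set r := n % p with hr
  have hqr : p * q + r = n := Nat.div_add_mod n p
  have hrp : r < p := Nat.mod_lt _ (by omega)
  have hq1 : 1 ≤ q := by rw [hq]; exact (Nat.one_le_div_iff (by omega)).mpr hn
  obtain ⟨E', hE'⟩ := Ep_dvd p
  have hXn : (X : ℤ_[p]⟦X⟧) ^ n * f = ∑ k ∈ range (q+1),
      (((1+X)^p - 1)^k * (-(C (p:ℤ_[p]) * Ep p))^(q - k) * ((q.choose k : ℕ) : ℤ_[p]⟦X⟧))
        * (X^r * f) := by
    have h1 : (X : ℤ_[p]⟦X⟧) ^ n = ((X^p)^q) * X^r := by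
      rw [← hqr, pow_add, pow_mul]
    have hx : (X : ℤ_[p]⟦X⟧) ^ p = ((1+X)^p - 1) + (-(C (p:ℤ_[p]) * Ep p)) := by
      rw [hY p]; ring
    have h2' : ((X : ℤ_[p]⟦X⟧)^p)^q = ∑ k ∈ range (q+1),
        ((1+X)^p - 1)^k * (-(C (p:ℤ_[p]) * Ep p))^(q - k) * ((q.choose k : ℕ) : ℤ_[p]⟦X⟧) := by
      rw [hx, add_pow]
    rw [h1, mul_assoc, h2', Finset.sum_mul]
  rw [hXn, rule_sum p Ψ hΨ]
  apply Ideal.sum_mem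
  intro k hk
  have hkq : k ≤ q := Nat.lt_succ_iff.mp (mem_range.mp hk)
  set m := q - k with hm
  set c : ℤ_[p] := (-(p:ℤ_[p]))^m * ((q.choose k : ℕ) : ℤ_[p]) with hc
  have hterm : (((1+X)^p - 1)^k * (-(C (p:ℤ_[p]) * Ep p))^m * ((q.choose k : ℕ) : ℤ_[p]⟦X⟧))
        * (X^r * f)
      = subst' ((1+X)^p - 1) (C c * X^k) * (X^(m+r) * (E'^m * f)) := by
    rw [subst'_C_mul, subst'_pow (hYc p), hE', hc, map_mul, map_pow, map_neg, map_natCast,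
      map_natCast, pow_add]
    ring
  rw [hterm, rule_mul p Ψ hΨ]
  have hlt : m + r < n := by
    have h2q : 2*q ≤ p*q := Nat.mul_le_mul_right q h2
    omega
  have hw := IH (m+r) hlt (E'^m * f)
  have hsplit : C c * X^k * Ψ (X^(m+r) * (E'^m * f))
      = C ((-1)^m * ((q.choose k : ℕ) : ℤ_[p])) *
        ((X^k * (p:ℤ_[p]⟦X⟧)^m) * Ψ (X^(m+r) * (E'^m * f))) := by
    rw [hc, neg_pow]
    simp only [map_mul, map_pow, map_natCast, map_neg, map_one]
    ring
  rw [hsplit]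
  apply Ideal.mul_mem_left
  apply span_mul_mem (Idl p 1 n) _ _ _ _ hw
  rintro t ⟨j', hj', rfl⟩
  simp only [Set.mem_Iic, pow_one] at hj'
  have hdiv : (m + r) / p ≤ m := by
    have hexp : (m+1)*p = m*p + p := by ring
    have hmp : m ≤ m*p := Nat.le_mul_of_pos_right m (by omega)
    have hmul : m + r < (m+1)*p := by omega
    exact Nat.lt_succ_iff.mp ((Nat.div_lt_iff_lt_mul (by omega)).mpr hmul)
  have hj'm : j' ≤ m := le_trans hj' hdiv
  have hshape : (X^k * (p:ℤ_[p]⟦X⟧)^m) * ((fun j : ℕ => X ^ j * (p : ℤ_[p]⟦X⟧) ^ (eI p 1 (m+r) j)) j')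
      = X^(k+j') * (p:ℤ_[p]⟦X⟧)^(m + eI p 1 (m+r) j') * 1 := by
    simp only []
    rw [pow_add, pow_add]
    ring
  rw [hshape]
  apply mem_Idl_of
  · simp only [pow_one]
    omega
  · have hqrZ : (p:ℤ) * q + r = (n:ℤ) := by exact_mod_cast hqr
    have hmZ : (m:ℤ) = (q:ℤ) - k := by
      rw [hm]; push_cast [Nat.cast_sub hkq]; ring
    have hnum : (n:ℤ) - 1 - ((k+j' : ℕ):ℤ)*p
        = (((m+r : ℕ):ℤ) - 1 - (j':ℤ)*p) + (m:ℤ)*((p:ℤ)-1) := by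
      push_cast
      linear_combination (-1 : ℤ) * hqrZ - (p:ℤ) * hmZ
    simp only [eI, Nat.sub_self, pow_zero, pow_one, one_mul]
    rw [hnum]
    have : ((j' : ℤ) : ℤ) * (p:ℤ) = (j':ℤ) * p := rfl
    exact N1 (((m+r : ℕ):ℤ) - 1 - (j':ℤ)*p) ((p:ℤ)-1) (by push_cast; omega) m

lemma iter_sum {ι : Type*} (a : ℕ) (s : Finset ι) (F : ι → ℤ_[p]⟦X⟧) :
    Ψ^[a] (∑ k ∈ s, F k) = ∑ k ∈ s, Ψ^[a] (F k) := by
  classical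
  induction s using Finset.cons_induction with
  | empty => simpa using iter_zero p Ψ hΨ a
  | cons k s hk ih =>
    rw [Finset.sum_cons, iter_add p Ψ hΨ a, ih, Finset.sum_cons]


theorem thmB : ∀ a, 1 ≤ a → ∀ (n : ℕ) (f : ℤ_[p]⟦X⟧), Ψ^[a] (X ^ n * f) ∈ Idl p a n := by
  intro a ha
  induction a, ha using Nat.le_induction with
  | base =>
    intro n f
    simpa [Function.iterate_one] using thmA p Ψ hΨ n f
  | succ a ha IH =>
    intro n f
    have h2 := hp.out.two_le
    rw [Function.iterate_succ_apply]
    have h1 : Ψ (X ^ n * f) ∈ Idl p 1 n := thmA p Ψ hΨ n f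
    rw [Idl] at h1
    obtain ⟨cf, hsupp, hsum⟩ := Submodule.mem_span_set.mp h1
    rw [← hsum, Finsupp.sum, iter_sum p Ψ hΨ a]
    apply Ideal.sum_mem
    intro t ht
    obtain ⟨j, hj, hjt⟩ := hsupp ht
    simp only [Set.mem_Iic, pow_one] at hj
    set ct := cf t with hct
    have hform : ct • t = C ((p : ℤ_[p]) ^ (eI p 1 n j)) * (X ^ j * ct) := by
      rw [← hjt, smul_eq_mul, map_pow, map_natCast]
      ring
    rw [hform, iter_C_mul p Ψ hΨ a]
    have hw := IH j ct
    have hCp : C ((p : ℤ_[p]) ^ (eI p 1 n j)) = (p : ℤ_[p]⟦X⟧) ^ (eI p 1 n j) := by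
      rw [map_pow, map_natCast]
    rw [hCp]
    apply span_mul_mem (Idl p (a+1) n) _ _ _ _ hw
    rintro t' ⟨j', hj', rfl⟩
    simp only [Set.mem_Iic] at hj'
    have hshape : (p : ℤ_[p]⟦X⟧) ^ (eI p 1 n j) *
        ((fun j'' : ℕ => X ^ j'' * (p : ℤ_[p]⟦X⟧) ^ (eI p a j j'')) j')
        = X ^ j' * (p : ℤ_[p]⟦X⟧) ^ (eI p 1 n j + eI p a j j') * 1 := by
      simp only []
      rw [pow_add]
      ring
    rw [hshape]
    apply mem_Idl_of
    · -- j' ≤ n / p^(a+1)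
      calc j' ≤ j / p ^ a := hj'
        _ ≤ (n / p) / p ^ a := Nat.div_le_div_right (by omega)
        _ = n / (p * p ^ a) := Nat.div_div_eq_div_mul n p (p ^ a)
        _ = n / p ^ (a + 1) := by rw [← pow_succ']
    · -- exponent estimate
      have hQ1 : (1:ℤ) ≤ (p:ℤ) ^ (a - 1) := one_le_pow₀ (by exact_mod_cast (by omega : 1 ≤ p))
      have hQP : (p:ℤ) ^ (a - 1) * p = (p:ℤ) ^ a := by
        rw [← pow_succ]
        congr 1
        omega
      have hQPP : (p:ℤ) ^ (a - 1) * p * p = (p:ℤ) ^ (a + 1) := by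
        rw [hQP, ← pow_succ]
      have hjn : (j:ℤ) * p ≤ (n:ℤ) := by
        exact_mod_cast (Nat.le_div_iff_mul_le (by omega : 0 < p)).mp hj
      have hj'j : (j':ℤ) * ((p:ℤ)^(a-1) * p) ≤ (j:ℤ) := by
        rw [hQP]
        exact_mod_cast (Nat.le_div_iff_mul_le (by positivity : 0 < p ^ a)).mp hj'
      have hN2 := N2 (p:ℤ) ((p:ℤ)^(a-1)) n j j' (by exact_mod_cast h2) hQ1 hjn hj'j
      have he1 : eI p 1 n j = (((n:ℤ) - 1 - j * p) / ((p:ℤ) - 1)).toNat := by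
        simp only [eI, Nat.sub_self, pow_zero, pow_one, one_mul]
      have he2 : eI p a j j' =
          (((j:ℤ) - (p:ℤ)^(a-1) - j' * ((p:ℤ)^(a-1) * p)) / ((p:ℤ)^(a-1) * ((p:ℤ) - 1))).toNat := by
        simp only [eI]
        rw [hQP]
      have he3 : eI p (a+1) n j' =
          (((n:ℤ) - (p:ℤ)^(a-1) * p - j' * ((p:ℤ)^(a-1) * p * p)) /
            ((p:ℤ)^(a-1) * p * ((p:ℤ) - 1))).toNat := by
        simp only [eI, Nat.add_sub_cancel]
        rw [pow_succ, ← hQP]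
      rw [he1, he2, he3]
      exact hN2

end PsiRules
end SE


/-- **Sharp Estimate I for `ψ^a`** (Theorem 4.1): if `Ψ : ℤ_p[[X]] → ℤ_p[[X]]` sends each
`g` to its `0`-th component in the basis `{(1+X)^i}_{i<p}` over the image of
substitution by `(1+X)^p - 1`, then for `a > 0`, `n ≥ 0` and any `f`, the iterate
`Ψ^a(X^n f)` lies in the ideal generated by `X^j p^[(n - p^(a-1) - j p^a)/(p^(a-1)(p-1))]`
for `0 ≤ j ≤ [n/p^a]`. -/
theorem sharp_estimate_I_iterated (p : ℕ) [hp : Fact p.Prime]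
    (Ψ : PowerSeries ℤ_[p] → PowerSeries ℤ_[p])
    (hΨ : ∀ g : PowerSeries ℤ_[p], ∃ x : ℕ → PowerSeries ℤ_[p],
      g = PowerSeries.subst' ((1 + X) ^ p - 1) (Ψ g) * 1 +
        ∑ i ∈ Finset.Icc 1 (p - 1), (1 + X) ^ i * PowerSeries.subst' ((1 + X) ^ p - 1) (x i))
    (a : ℕ) (ha : 0 < a) (n : ℕ) (f : PowerSeries ℤ_[p]) :
    Ψ^[a] (X ^ n * f) ∈ Ideal.span ((fun j : ℕ => X ^ j *
        (p : PowerSeries ℤ_[p]) ^ ((((n : ℤ) - (p : ℤ) ^ (a - 1) - j * (p : ℤ) ^ a) /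
          ((p : ℤ) ^ (a - 1) * ((p : ℤ) - 1))).toNat)) ''
      (Set.Iic (n / p ^ a))) := by
  have := SE.thmB p Ψ hΨ a ha n f
  simpa [SE.Idl, SE.eI] using this
end

section
/- Let p be a prime and let Ψ : ℤ_p[[X]] → ℤ_p[[X]] be a function such that for every g ∈ ℤ_p[[X]] there exist x_1, ..., x_{p-1} ∈ ℤ_p[[X]] with g = Ψ(g)((1+X)^p - 1)·1 + Σ_{i=1}^{p-1} (1+X)^i · x_i((1+X)^p - 1). Then for every positive integer a and all integers n ≥ 0, m ≥ 0, and every j ≥ 0, the coefficient of X^j in the a-fold iterate Ψ^a(X^n · (1+X)^m) equals the sum over all integers k with 0 ≤ k ≤ n and k ≡ -m (mod p^a) of (-1)^(n-k) · C(n,k) · C((k+m)/p^a, j) (viewed in ℤ_p). -/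
open PowerSeries

namespace PsiAux
open PowerSeries Finset

variable {R : Type*} [CommRing R]

lemma coeff_subst' (g f : R⟦X⟧) (d : ℕ) :
    coeff d (subst' g f) = ∑ n ∈ range (d + 1), coeff n f * coeff d (g ^ n) :=
  coeff_mk _ _

lemma subst'_add (g f₁ f₂ : R⟦X⟧) : subst' g (f₁ + f₂) = subst' g f₁ + subst' g f₂ := by
  ext d
  simp [coeff_subst', add_mul, Finset.sum_add_distrib]

lemma subst'_sub (g f₁ f₂ : R⟦X⟧) : subst' g (f₁ - f₂) = subst' g f₁ - subst' g f₂ := by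
  ext d
  simp [coeff_subst', sub_mul, Finset.sum_sub_distrib]

lemma subst'_smul (g : R⟦X⟧) (c : R) (f : R⟦X⟧) : subst' g (c • f) = c • subst' g f := by
  ext d
  simp [coeff_subst', Finset.mul_sum, mul_assoc]

lemma subst'_sum {ι : Type*} (g : R⟦X⟧) (s : Finset ι) (f : ι → R⟦X⟧) :
    subst' g (∑ i ∈ s, f i) = ∑ i ∈ s, subst' g (f i) := by
  classical
  induction s using Finset.induction with
  | empty => ext d; simp [coeff_subst']
  | insert _ _ h ih => simp [Finset.sum_insert h, subst'_add, ih]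

lemma map_subst' {S : Type*} [CommRing S] (σ : R →+* S) (g f : R⟦X⟧) :
    PowerSeries.map σ (subst' g f) = subst' (PowerSeries.map σ g) (PowerSeries.map σ f) := by
  ext d
  simp [coeff_subst', coeff_map, ← map_pow]

lemma coeff_one_add_X_pow (s d : ℕ) : coeff (R := R) d ((1 + X) ^ s) = s.choose d := by
  rw [add_comm (1 : R⟦X⟧) X, add_pow]
  rw [map_sum]
  have : ∀ m ∈ range (s+1), coeff d ((X:R⟦X⟧)^m * 1^(s-m) * (s.choose m : R⟦X⟧))
      = if d = m then (s.choose m : R) else 0 := by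
    intro m _
    rw [one_pow, mul_one, ← map_natCast (C (R := R)), coeff_mul_C, coeff_X_pow]
    split <;> simp
  rw [Finset.sum_congr rfl this, Finset.sum_ite_eq (range (s+1)) d]
  by_cases h : d < s + 1
  · simp [h]
  · rw [if_neg (by simpa using h), Nat.choose_eq_zero_of_lt (by omega), Nat.cast_zero]

lemma coeff_pow_eq_zero {g : R⟦X⟧} (hg : constantCoeff g = 0) {d n : ℕ} (h : d < n) :
    coeff d (g ^ n) = 0 := by
  have : (X : R⟦X⟧) ^ n ∣ g ^ n := pow_dvd_pow_of_dvd (X_dvd_iff.mpr hg) n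
  exact X_pow_dvd_iff.mp this d h

lemma subst'_one_add_pow {g : R⟦X⟧} (hg : constantCoeff g = 0) (s : ℕ) :
    subst' g ((1 + X) ^ s) = (1 + g) ^ s := by
  ext d
  have e1 : (coeff d) (subst' g ((1+X)^s))
      = ∑ n ∈ range (d + 1), (s.choose n : R) * coeff d (g ^ n) := by
    rw [coeff_subst']
    exact Finset.sum_congr rfl fun n _ => by rw [coeff_one_add_X_pow]
  have e2 : (coeff d) ((1 + g) ^ s)
      = ∑ n ∈ range (s + 1), (s.choose n : R) * coeff d (g ^ n) := by
    rw [add_comm (1:R⟦X⟧) g, add_pow, map_sum]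
    refine Finset.sum_congr rfl fun n _ => ?_
    rw [one_pow, mul_one, ← map_natCast (C (R := R)), coeff_mul_C, mul_comm]
  rw [e1, e2,
    Finset.sum_subset (Finset.range_subset_range.mpr (by omega : d+1 ≤ d+s+2))
      (fun n hn hn' => by
        rw [coeff_pow_eq_zero hg (by simp at hn hn' ⊢; omega), mul_zero]),
    Finset.sum_subset (Finset.range_subset_range.mpr (by omega : s+1 ≤ d+s+2))
      (fun n hn hn' => by
        rw [Nat.choose_eq_zero_of_lt (by simp at hn hn' ⊢; omega), Nat.cast_zero, zero_mul])]

lemma coeff_subst'_X_pow {p : ℕ} (hp : 0 < p) (f : R⟦X⟧) (d : ℕ) :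
    coeff d (subst' ((X : R⟦X⟧) ^ p) f) = if p ∣ d then coeff (d / p) f else 0 := by
  rw [coeff_subst']
  have key : ∀ n ∈ range (d+1), coeff n f * coeff d (((X:R⟦X⟧)^p)^n)
      = if d = p * n then coeff n f else 0 := by
    intro n _
    rw [← pow_mul, coeff_X_pow]
    split <;> simp
  rw [Finset.sum_congr rfl key]
  by_cases h : p ∣ d
  · obtain ⟨q, rfl⟩ := h
    rw [Finset.sum_eq_single q]
    · rw [if_pos rfl, if_pos (Dvd.intro q rfl), Nat.mul_div_cancel_left _ hp]
    · intro b _ hb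
      rw [if_neg (fun hc => hb (by exact (Nat.eq_of_mul_eq_mul_left hp hc).symm))]
    · intro hq
      exact absurd (Finset.mem_range.mpr (by
        have := Nat.le_mul_of_pos_left q hp; omega)) hq
  · rw [if_neg h, Finset.sum_eq_zero]
    intro n _
    rw [if_neg (fun hc => h ⟨n, hc⟩)]

lemma coeff_cross {p : ℕ} (hp : 0 < p) (i : ℕ) (hi : i < p)
    (f : R⟦X⟧) (q s : ℕ) (hs : s < p) :
    coeff (p * q + s) ((1 + X) ^ i * subst' ((X : R⟦X⟧) ^ p) f)
      = (i.choose s : R) * coeff q f := by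
  rw [coeff_mul, Finset.sum_eq_single (s, p * q)]
  · rw [coeff_one_add_X_pow, coeff_subst'_X_pow hp, if_pos (Dvd.intro q rfl),
      Nat.mul_div_cancel_left _ hp]
  · rintro ⟨u, v⟩ huv hne
    rw [Finset.HasAntidiagonal.mem_antidiagonal] at huv
    rw [coeff_one_add_X_pow, coeff_subst'_X_pow hp]
    by_cases hdvd : p ∣ v
    · by_cases hu : u ≤ i
      · exfalso
        obtain ⟨w, rfl⟩ := hdvd
        have h1 : u % p = u := Nat.mod_eq_of_lt (by omega)
        have h2 : (u + p * w) % p = u % p := by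
          rw [Nat.add_mul_mod_self_left]
        have h3 : (p * q + s) % p = s := by
          rw [Nat.mul_add_mod, Nat.mod_eq_of_lt hs]
        have hus : u = s := by rw [← h1, ← h2, huv, h3]
        subst hus
        have : w = q := by
          have : p * w = p * q := by omega
          exact Nat.eq_of_mul_eq_mul_left hp this
        exact hne (by rw [this])
      · rw [Nat.choose_eq_zero_of_lt (by omega), Nat.cast_zero, zero_mul]
    · rw [if_neg hdvd, mul_zero]
  · intro h
    exact absurd (Finset.HasAntidiagonal.mem_antidiagonal.mpr (by omega)) h

lemma indep_modp (p : ℕ) [hp : Fact p.Prime] (h : ℕ → (ZMod p)⟦X⟧)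
    (H : ∑ i ∈ range p, (1 + X) ^ i * subst' ((1 + X) ^ p - 1) (h i) = 0) :
    ∀ i, i < p → h i = 0 := by
  haveI : CharP ((ZMod p)⟦X⟧) p :=
    charP_of_injective_ringHom (f := C (R := ZMod p)) C_injective p
  have hφ : ((1 : (ZMod p)⟦X⟧) + X) ^ p - 1 = X ^ p := by
    rw [add_pow_char, one_pow, add_sub_cancel_left]
  rw [hφ] at H
  have ppos : 0 < p := hp.out.pos
  have H' : ∀ q s, s < p →
      ∑ i ∈ range p, (i.choose s : ZMod p) * coeff q (h i) = 0 := by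
    intro q s hs
    have := congrArg (coeff (p * q + s)) H
    rw [map_sum, map_zero] at this
    rw [← this]
    exact Finset.sum_congr rfl fun i hi =>
      (coeff_cross ppos i (Finset.mem_range.mp hi) (h i) q s hs).symm
  have key : ∀ t s, p ≤ s + t + 1 → s < p → h s = 0 := by
    intro t
    induction t with
    | zero =>
      intro s h1 h2
      ext q
      have := H' q s h2
      rw [Finset.sum_eq_single s] at this
      · simpa using this
      · intro b hb hbs
        rw [Nat.choose_eq_zero_of_lt (by
          rcases Nat.lt_or_ge b s with hlt | hge
          · exact hlt
          · exact absurd (by omega : p ≤ b) (by simpa using hb)), Nat.cast_zero, zero_mul]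
      · intro hs; exact absurd (Finset.mem_range.mpr h2) hs
    | succ t ih =>
      intro s h1 h2
      ext q
      have := H' q s h2
      rw [Finset.sum_eq_single s] at this
      · simpa using this
      · intro b hb hbs
        rcases Nat.lt_or_ge b s with hlt | hge
        · rw [Nat.choose_eq_zero_of_lt hlt, Nat.cast_zero, zero_mul]
        · have : h b = 0 := ih b (by omega) (Finset.mem_range.mp hb)
          rw [this, map_zero, mul_zero]
      · intro hs; exact absurd (Finset.mem_range.mpr h2) hs
  intro i hi
  exact key p i (by omega) hi

lemma padic_zero {p : ℕ} [hp : Fact p.Prime] (x : ℤ_[p])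
    (h : ∀ N, (p : ℤ_[p]) ^ N ∣ x) : x = 0 := by
  by_contra hx
  have hnorm : 0 < ‖x‖ := by simpa [norm_pos_iff] using hx
  obtain ⟨N, hN⟩ := exists_pow_lt_of_lt_one hnorm
    (by
      rw [inv_lt_one_iff₀]
      right
      exact_mod_cast hp.out.one_lt : (p : ℝ)⁻¹ < 1)
  have hmem : x ∈ Ideal.span {(p : ℤ_[p]) ^ N} := Ideal.mem_span_singleton.mpr (h N)
  have := (PadicInt.norm_le_pow_iff_mem_span_pow x N).mpr hmem
  have : ‖x‖ ≤ ((p : ℝ)⁻¹) ^ N := by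
    rwa [zpow_neg, zpow_natCast, ← inv_pow] at this
  linarith

lemma dvd_step (p : ℕ) [hp : Fact p.Prime] (g : ℕ → ℤ_[p]⟦X⟧)
    (H : ∑ i ∈ range p, (1 + X) ^ i * subst' ((1 + X) ^ p - 1) (g i) = 0) :
    ∀ i, i < p → ∀ d, (p : ℤ_[p]) ∣ coeff d (g i) := by
  intro i hi d
  set σ : ℤ_[p] →+* ZMod p := PadicInt.toZMod
  have Hm : ∑ k ∈ range p, (1 + X) ^ k *
      subst' ((1 + X) ^ p - 1) (PowerSeries.map σ (g k)) = 0 := by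
    have := congrArg (PowerSeries.map σ) H
    rw [map_sum, map_zero] at this
    rw [← this]
    refine Finset.sum_congr rfl fun k _ => ?_
    rw [map_mul, map_pow, map_add, PowerSeries.map_X, map_subst',
      map_sub, map_pow, map_add, PowerSeries.map_X]
    simp only [map_one]
  have h0 : PowerSeries.map σ (g i) = 0 := indep_modp p _ Hm i hi
  have : σ (coeff d (g i)) = 0 := by
    rw [← PowerSeries.coeff_map, h0, map_zero]
  rwa [← RingHom.mem_ker, PadicInt.ker_toZMod, PadicInt.maximalIdeal_eq_span_p,
    Ideal.mem_span_singleton] at this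

lemma indep (p : ℕ) [hp : Fact p.Prime] (g : ℕ → ℤ_[p]⟦X⟧)
    (H : ∑ i ∈ range p, (1 + X) ^ i * subst' ((1 + X) ^ p - 1) (g i) = 0) :
    ∀ i, i < p → g i = 0 := by
  have key : ∀ N (g : ℕ → ℤ_[p]⟦X⟧),
      (∑ i ∈ range p, (1 + X) ^ i * subst' ((1 + X) ^ p - 1) (g i) = 0) →
      ∀ i, i < p → ∀ d, (p : ℤ_[p]) ^ N ∣ coeff d (g i) := by
    intro N
    induction N with
    | zero => intro g _ i _ d; simpa using one_dvd _
    | succ N ih =>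
      intro g H i hi d
      have h1 := dvd_step p g H
      set g' : ℕ → ℤ_[p]⟦X⟧ := fun k =>
        if hk : k < p then PowerSeries.mk (fun e => Classical.choose (h1 k hk e)) else 0 with hg'
      have hspec : ∀ k (hk : k < p), g k = (p : ℤ_[p]) • g' k := by
        intro k hk
        ext e
        rw [PowerSeries.coeff_smul, hg']
        simp only [dif_pos hk, PowerSeries.coeff_mk]
        exact Classical.choose_spec (h1 k hk e)
      have H' : ∑ k ∈ range p, (1 + X) ^ k * subst' ((1 + X) ^ p - 1) (g' k) = 0 := by
        have hp0 : (p : ℤ_[p]) ≠ 0 := Nat.cast_ne_zero.mpr hp.out.ne_zero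
        ext e
        have hz : (p : ℤ_[p]) •
            (∑ k ∈ range p, (1 + X) ^ k * subst' ((1 + X) ^ p - 1) (g' k)) = 0 := by
          rw [Finset.smul_sum, ← H]
          refine Finset.sum_congr rfl fun k hk => ?_
          rw [hspec k (Finset.mem_range.mp hk)]
          rw [subst'_smul, mul_smul_comm]
        have := congrArg (coeff e) hz
        rw [PowerSeries.coeff_smul, map_zero, smul_eq_mul] at this
        rw [map_zero]
        exact (mul_eq_zero.mp this).resolve_left hp0
      rw [hspec i hi, PowerSeries.coeff_smul, smul_eq_mul, pow_succ, mul_comm ((p:ℤ_[p])^N)]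
      exact mul_dvd_mul_left _ (ih g' H' i hi d)
  intro i hi
  ext d
  rw [map_zero]
  exact padic_zero _ fun N => key N g H i hi d


lemma psi_unique (p : ℕ) [hp : Fact p.Prime]
    (Ψ : PowerSeries ℤ_[p] → PowerSeries ℤ_[p])
    (hΨ : ∀ g : PowerSeries ℤ_[p], ∃ x : ℕ → PowerSeries ℤ_[p],
      g = PowerSeries.subst' ((1 + X) ^ p - 1) (Ψ g) * 1 +
        ∑ i ∈ Finset.Icc 1 (p - 1), (1 + X) ^ i * PowerSeries.subst' ((1 + X) ^ p - 1) (x i))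
    (g f : PowerSeries ℤ_[p]) (x : ℕ → PowerSeries ℤ_[p])
    (hx : g = PowerSeries.subst' ((1 + X) ^ p - 1) f +
        ∑ i ∈ Finset.Icc 1 (p - 1), (1 + X) ^ i * PowerSeries.subst' ((1 + X) ^ p - 1) (x i)) :
    Ψ g = f := by
  obtain ⟨y, hy⟩ := hΨ g
  rw [mul_one] at hy
  set G : ℕ → PowerSeries ℤ_[p] := fun i => if i = 0 then Ψ g - f else y i - x i with hG
  have hrange : range p = insert 0 (Finset.Icc 1 (p - 1)) := by
    have := hp.out.pos
    ext k
    simp only [Finset.mem_range, Finset.mem_insert, Finset.mem_Icc]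
    omega
  have H : ∑ i ∈ range p, (1 + X) ^ i * subst' ((1 + X) ^ p - 1) (G i) = 0 := by
    rw [hrange, Finset.sum_insert (by simp)]
    have h0 : G 0 = Ψ g - f := by simp [hG]
    have hi : ∀ i ∈ Finset.Icc 1 (p-1), (1 + X) ^ i * subst' ((1 + X) ^ p - 1) (G i)
        = (1 + X) ^ i * subst' ((1 + X) ^ p - 1) (y i)
          - (1 + X) ^ i * subst' ((1 + X) ^ p - 1) (x i) := by
      intro i hi
      have : G i = y i - x i := by
        simp only [hG]
        rw [if_neg (by simp at hi; omega)]
      rw [this, subst'_sub, mul_sub]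
    rw [Finset.sum_congr rfl hi, h0, subst'_sub, pow_zero, one_mul,
      Finset.sum_sub_distrib]
    have := hy.symm.trans hx
    rw [sub_add_sub_comm]
    exact sub_eq_zero.mpr this
  have := indep p G H 0 hp.out.pos
  rw [hG] at this
  simpa [sub_eq_zero] using this

lemma const_phi (p : ℕ) [hp : Fact p.Prime] :
    constantCoeff (R := ℤ_[p]) ((1 + X) ^ p - 1) = 0 := by
  simp

lemma subst'_phi_pow (p : ℕ) [hp : Fact p.Prime] (s : ℕ) :
    subst' ((1 + (X : ℤ_[p]⟦X⟧)) ^ p - 1) ((1 + X) ^ s) = (1 + X) ^ (p * s) := by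
  rw [subst'_one_add_pow (const_phi p), add_sub_cancel, ← pow_mul]

lemma psi_step (p : ℕ) [hp : Fact p.Prime]
    (Ψ : PowerSeries ℤ_[p] → PowerSeries ℤ_[p])
    (hΨ : ∀ g : PowerSeries ℤ_[p], ∃ x : ℕ → PowerSeries ℤ_[p],
      g = PowerSeries.subst' ((1 + X) ^ p - 1) (Ψ g) * 1 +
        ∑ i ∈ Finset.Icc 1 (p - 1), (1 + X) ^ i * PowerSeries.subst' ((1 + X) ^ p - 1) (x i))
    (s : Finset ℕ) (c : ℕ → ℤ_[p]) (t : ℕ → ℕ) :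
    Ψ (∑ k ∈ s, c k • (1 + X) ^ (t k)) =
      ∑ k ∈ s.filter (fun k => p ∣ t k), c k • (1 + X) ^ (t k / p) := by
  apply psi_unique p Ψ hΨ _ _
    (fun i => ∑ k ∈ s.filter (fun k => t k % p = i), c k • (1 + X) ^ (t k / p))
  have hsub : ∀ (u : Finset ℕ) (w : ℕ → ℕ), subst' ((1 + (X:ℤ_[p]⟦X⟧)) ^ p - 1)
      (∑ k ∈ u, c k • (1 + X) ^ (w k)) = ∑ k ∈ u, c k • (1 + X) ^ (p * w k) := by
    intro u w
    rw [subst'_sum]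
    exact Finset.sum_congr rfl fun k _ => by rw [subst'_smul, subst'_phi_pow]
  rw [hsub]
  have e1 : ∑ k ∈ s.filter (fun k => p ∣ t k), c k • ((1:ℤ_[p]⟦X⟧) + X) ^ (p * (t k / p))
      = ∑ k ∈ s.filter (fun k => p ∣ t k), c k • (1 + X) ^ (t k) := by
    refine Finset.sum_congr rfl fun k hk => ?_
    rw [Nat.mul_div_cancel' (Finset.mem_filter.mp hk).2]
  have e2 : ∀ i ∈ Finset.Icc 1 (p - 1),
      (1 + (X:ℤ_[p]⟦X⟧)) ^ i * subst' ((1 + X) ^ p - 1)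
        (∑ k ∈ s.filter (fun k => t k % p = i), c k • (1 + X) ^ (t k / p))
      = ∑ k ∈ s.filter (fun k => t k % p = i), c k • (1 + X) ^ (t k) := by
    intro i hi
    rw [hsub, Finset.mul_sum]
    refine Finset.sum_congr rfl fun k hk => ?_
    rw [mul_smul_comm, ← pow_add]
    congr 2
    rw [← (Finset.mem_filter.mp hk).2]
    exact Nat.mod_add_div _ _
  rw [e1, Finset.sum_congr rfl e2]
  have hmap : ∀ k ∈ s.filter (fun k => ¬ p ∣ t k), t k % p ∈ Finset.Icc 1 (p - 1) := by
    intro k hk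
    have h2 := (Finset.mem_filter.mp hk).2
    have h3 : t k % p ≠ 0 := fun hc => h2 (Nat.dvd_iff_mod_eq_zero.mpr hc)
    have := Nat.mod_lt (t k) hp.out.pos
    simp only [Finset.mem_Icc]
    omega
  conv_lhs => rw [← Finset.sum_filter_add_sum_filter_not s (fun k => p ∣ t k)
    (fun k => c k • ((1:ℤ_[p]⟦X⟧) + X) ^ (t k))]
  congr 1
  rw [← Finset.sum_fiberwise_of_maps_to hmap (fun k => c k • ((1:ℤ_[p]⟦X⟧) + X) ^ (t k))]
  refine Finset.sum_congr rfl fun i hi => ?_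
  rw [Finset.filter_filter]
  refine Finset.sum_congr ?_ fun _ _ => rfl
  simp only [Finset.mem_Icc] at hi
  ext k
  simp only [Finset.mem_filter]
  constructor
  · rintro ⟨hks, _, h2⟩; exact ⟨hks, h2⟩
  · rintro ⟨hks, h2⟩
    refine ⟨hks, fun hc => ?_, h2⟩
    rw [Nat.dvd_iff_mod_eq_zero.mp hc] at h2
    omega

lemma psi_iter (p : ℕ) [hp : Fact p.Prime]
    (Ψ : PowerSeries ℤ_[p] → PowerSeries ℤ_[p])
    (hΨ : ∀ g : PowerSeries ℤ_[p], ∃ x : ℕ → PowerSeries ℤ_[p],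
      g = PowerSeries.subst' ((1 + X) ^ p - 1) (Ψ g) * 1 +
        ∑ i ∈ Finset.Icc 1 (p - 1), (1 + X) ^ i * PowerSeries.subst' ((1 + X) ^ p - 1) (x i))
    (a : ℕ) (s : Finset ℕ) (c : ℕ → ℤ_[p]) (t : ℕ → ℕ) :
    Ψ^[a] (∑ k ∈ s, c k • (1 + X) ^ (t k)) =
      ∑ k ∈ s.filter (fun k => p ^ a ∣ t k), c k • (1 + X) ^ (t k / p ^ a) := by
  induction a generalizing s t with
  | zero =>
    simp only [Function.iterate_zero, id_eq, pow_zero, Nat.div_one]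
    rw [Finset.filter_true_of_mem (fun _ _ => one_dvd _)]
  | succ a ih =>
    rw [Function.iterate_succ_apply, psi_step p Ψ hΨ s c t,
      ih (s.filter (fun k => p ∣ t k)) (fun k => t k / p), Finset.filter_filter]
    have hcond : ∀ k, (p ∣ t k ∧ p ^ a ∣ t k / p) ↔ p ^ (a+1) ∣ t k := by
      intro k
      rw [pow_succ']
      constructor
      · rintro ⟨h1, h2⟩
        obtain ⟨w, hw⟩ := h1
        obtain ⟨v, hv⟩ := h2
        refine ⟨v, ?_⟩
        rw [hw, Nat.mul_div_cancel_left _ hp.out.pos] at hv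
        rw [hw, hv, mul_assoc]
      · rintro ⟨v, hv⟩
        have h1 : p ∣ t k := ⟨p ^ a * v, by rw [hv]; ring⟩
        refine ⟨h1, v, ?_⟩
        rw [hv, mul_assoc, Nat.mul_div_cancel_left _ hp.out.pos]
    have hset : s.filter (fun k => p ∣ t k ∧ p ^ a ∣ t k / p)
        = s.filter (fun k => p ^ (a+1) ∣ t k) := by
      ext k
      simp only [Finset.mem_filter, hcond k]
    rw [hset]
    refine Finset.sum_congr rfl fun k hk => ?_
    rw [Nat.div_div_eq_div_mul, ← pow_succ']

end PsiAux

/-- **Lemma 4.2** (with `r = -m`): if `Ψ : ℤ_p[[X]] → ℤ_p[[X]]` sends each `g` to its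
`0`-th component in the basis `{(1+X)^i}_{i<p}` over the image of substitution by
`(1+X)^p - 1`, then for `a > 0` and `n, m, j ≥ 0`, the coefficient of `X^j` in
`Ψ^a(X^n (1+X)^m)` equals `∑_{k ≡ -m mod p^a} (-1)^(n-k) C(n,k) C((k+m)/p^a, j)`. -/
theorem psi_iterate_coeff_formula (p : ℕ) [hp : Fact p.Prime]
    (Ψ : PowerSeries ℤ_[p] → PowerSeries ℤ_[p])
    (hΨ : ∀ g : PowerSeries ℤ_[p], ∃ x : ℕ → PowerSeries ℤ_[p],
      g = PowerSeries.subst' ((1 + X) ^ p - 1) (Ψ g) * 1 +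
        ∑ i ∈ Finset.Icc 1 (p - 1), (1 + X) ^ i * PowerSeries.subst' ((1 + X) ^ p - 1) (x i))
    (a : ℕ) (ha : 0 < a) (n m j : ℕ) :
    coeff j (Ψ^[a] (X ^ n * (1 + X) ^ m)) =
      ((∑ k ∈ (Finset.range (n + 1)).filter
          (fun k : ℕ => (k : ℤ) ≡ -(m : ℤ) [ZMOD ((p : ℤ) ^ a)]),
        (-1) ^ (n - k) * (n.choose k : ℤ) *
          Ring.choose (((k : ℤ) + m) / (p : ℤ) ^ a) j : ℤ) : ℤ_[p]) := by
  classical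
  set c : ℕ → ℤ_[p] := fun k => (((-1) ^ (n - k) * (n.choose k : ℤ) : ℤ) : ℤ_[p]) with hc
  have hdecomp : (X : ℤ_[p]⟦X⟧) ^ n * (1 + X) ^ m
      = ∑ k ∈ Finset.range (n + 1), c k • (1 + X) ^ (k + m) := by
    have hX : (X : ℤ_[p]⟦X⟧) = (1 + X) - 1 := by ring
    rw [hX, sub_pow, Finset.sum_mul]
    refine Finset.sum_congr rfl fun k hk => ?_
    have hkn : k ≤ n := by simp at hk; omega
    have hsign : ((-1 : ℤ_[p]⟦X⟧)) ^ (k + n) = (-1) ^ (n - k) := by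
      have : k + n = (n - k) + 2 * k := by omega
      rw [this, pow_add, pow_mul]
      simp
    rw [hc, PowerSeries.smul_eq_C_mul]
    simp only [map_mul, map_pow, map_neg, map_one, map_natCast, Int.cast_mul,
      Int.cast_pow, Int.cast_neg, Int.cast_one, Int.cast_natCast]
    rw [← hsign, pow_add]
    ring
  rw [hdecomp, PsiAux.psi_iter p Ψ hΨ a (Finset.range (n+1)) c (fun k => k + m)]
  have hfilters : (Finset.range (n + 1)).filter
        (fun k : ℕ => (k : ℤ) ≡ -(m : ℤ) [ZMOD ((p : ℤ) ^ a)])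
      = (Finset.range (n + 1)).filter (fun k => p ^ a ∣ k + m) := by
    ext k
    simp only [Finset.mem_filter, and_congr_right_iff]
    intro _
    rw [Int.modEq_iff_dvd, show (-(m:ℤ)) - k = -((k:ℤ)+(m:ℤ)) by ring, dvd_neg,
      ← Nat.cast_add, ← Nat.cast_pow, Int.natCast_dvd_natCast]
  rw [map_sum, hfilters, Int.cast_sum]
  refine Finset.sum_congr rfl fun k hk => ?_
  have hdvd := (Finset.mem_filter.mp hk).2
  rw [PowerSeries.coeff_smul, PsiAux.coeff_one_add_X_pow, smul_eq_mul]
  have h1 : ((k : ℤ) + m) / (p : ℤ) ^ a = (((k + m) / p ^ a : ℕ) : ℤ) := by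
    have h0 : p ^ a * ((k + m) / p ^ a) = k + m := Nat.mul_div_cancel' hdvd
    have hne : ((p : ℤ)) ^ a ≠ 0 := by
      have := hp.out.pos
      positivity
    rw [show ((k:ℤ) + m) = ((p:ℤ)^a * (((k + m) / p ^ a : ℕ) : ℤ) ) by
      rw [← Nat.cast_pow, ← Nat.cast_mul, h0]; push_cast; ring]
    rw [Int.mul_ediv_cancel_left _ hne]
  rw [h1, Ring.choose_natCast]
  rw [hc]
  push_cast
  ring
end
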